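/- Fix a bandwidth W > 0, noise density N₀ > 0, transmit power P > 0, an integer K ≥ 1, a parameter ρ ∈ (0,1], and a tolerable error probability P_e ∈ (0,1). Let φ₁ = ρ·ln(1 + P/((1+ρ)((K−1)P + N₀W))), and for each positive integer M let S₁(M) = −ln P_e + ρ·ln M and f₁(M) = K·W·φ₁·(ln M)/⌈S₁(M)⌉_{φ₁}. Then f₁ increases with the message alphabet size in the following sense: for every positive integer M¹ there exists a positive integer M² > M¹ such that f₁(M²) > f₁(M¹). -/

import Mathlib

/-- `qceil x q` is the smallest positive integer multiple of `q` that is at least `x`,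
i.e. `min {n*q : n ∈ ℤ, n ≥ 1, x ≤ n*q}`. -/
noncomputable def qceil (x q : ℝ) : ℝ := q * ((max 1 ⌈x / q⌉ : ℤ) : ℝ)

lemma qceil_pos {x q : ℝ} (hq : 0 < q) : 0 < qceil x q := by
  unfold qceil
  have h : (1:ℝ) ≤ ((max 1 ⌈x / q⌉ : ℤ) : ℝ) := by exact_mod_cast le_max_left 1 ⌈x / q⌉
  nlinarith

lemma le_qceil {x q : ℝ} (hq : 0 < q) : x ≤ qceil x q := by
  unfold qceil
  have h1 : x / q ≤ ((⌈x / q⌉ : ℤ) : ℝ) := Int.le_ceil _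
  have h2 : ((⌈x / q⌉ : ℤ) : ℝ) ≤ ((max 1 ⌈x / q⌉ : ℤ) : ℝ) := by
    exact_mod_cast le_max_right 1 ⌈x / q⌉
  calc x = q * (x / q) := by field_simp
    _ ≤ q * ((max 1 ⌈x / q⌉ : ℤ) : ℝ) :=
        mul_le_mul_of_nonneg_left (h1.trans h2) hq.le

lemma qceil_le {x q : ℝ} (hq : 0 < q) (hx : 0 < x) : qceil x q ≤ x + q := by
  unfold qceil
  have h1 : (1:ℤ) ≤ ⌈x / q⌉ := Int.ceil_pos.mpr (div_pos hx hq)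
  rw [max_eq_right h1]
  have h2 : ((⌈x / q⌉ : ℤ) : ℝ) < x / q + 1 := Int.ceil_lt_add_one _
  calc q * ((⌈x/q⌉:ℤ):ℝ) ≤ q * (x/q + 1) := mul_le_mul_of_nonneg_left h2.le hq.le
    _ = x + q := by field_simp

/-- Corollary 3 (monotonicity part): the maximum stable nat arrival rate `f₁`
increases with the message alphabet size. -/
theorem stmt0 (W N₀ P : ℝ) (hW : 0 < W) (hN₀ : 0 < N₀) (hP : 0 < P)
    (K : ℕ) (hK : 1 ≤ K) (ρ : ℝ) (hρ : ρ ∈ Set.Ioc (0 : ℝ) 1)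
    (Pe : ℝ) (hPe : Pe ∈ Set.Ioo (0 : ℝ) 1) :
    let φ₁ : ℝ := ρ * Real.log (1 + P / ((1 + ρ) * (((K : ℝ) - 1) * P + N₀ * W)))
    let S₁ : ℕ → ℝ := fun M => -Real.log Pe + ρ * Real.log M
    let f₁ : ℕ → ℝ := fun M => (K : ℝ) * W * φ₁ * Real.log M / qceil (S₁ M) φ₁
    ∀ M₁ : ℕ, 0 < M₁ → ∃ M₂ : ℕ, M₁ < M₂ ∧ f₁ M₁ < f₁ M₂ := by
  intro φ₁ S₁ f₁ M₁ hM₁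
  have hρ0 : 0 < ρ := hρ.1
  have hK1 : (1:ℝ) ≤ (K:ℝ) := by exact_mod_cast hK
  have hden : 0 < (1 + ρ) * (((K:ℝ) - 1) * P + N₀ * W) := by
    have h1 : 0 ≤ ((K:ℝ) - 1) * P := mul_nonneg (by linarith) hP.le
    have h2 : 0 < N₀ * W := mul_pos hN₀ hW
    apply mul_pos (by linarith) (by linarith)
  have hφ : 0 < φ₁ := by
    apply mul_pos hρ0
    apply Real.log_pos
    have := div_pos hP hden
    linarith
  have ha : 0 < -Real.log Pe := by
    have := Real.log_neg hPe.1 hPe.2; linarith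
  set a : ℝ := -Real.log Pe with ha'
  set C : ℝ := (K:ℝ) * W with hC
  have hCpos : 0 < C := mul_pos (by linarith) hW
  set f : ℝ := f₁ M₁ with hf
  -- f is nonnegative
  have hfnn : 0 ≤ f := by
    rw [hf]
    show 0 ≤ C * φ₁ * Real.log M₁ / qceil (S₁ M₁) φ₁
    apply div_nonneg _ (qceil_pos hφ).le
    have : (0:ℝ) ≤ Real.log M₁ := Real.log_natCast_nonneg M₁
    positivity
  -- key : f * ρ < C * φ₁
  have key : f * ρ < C * φ₁ := by
    rcases eq_or_lt_of_le (show 1 ≤ M₁ from hM₁) with h1 | h2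
    · have hf0 : f = 0 := by
        rw [hf]
        show C * φ₁ * Real.log M₁ / qceil (S₁ M₁) φ₁ = 0
        rw [← h1]; simp
      rw [hf0, zero_mul]; exact mul_pos hCpos hφ
    · have hlog : 0 < Real.log M₁ := Real.log_pos (by exact_mod_cast h2)
      have hS : ρ * Real.log M₁ < S₁ M₁ := by
        show ρ * Real.log M₁ < a + ρ * Real.log M₁; linarith
      have hq : ρ * Real.log M₁ < qceil (S₁ M₁) φ₁ := lt_of_lt_of_le hS (le_qceil hφ)
      have hnum : 0 < C * φ₁ * Real.log M₁ := by positivity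
      have h3 : f < C * φ₁ * Real.log M₁ / (ρ * Real.log M₁) := by
        rw [hf]
        show C * φ₁ * Real.log M₁ / qceil (S₁ M₁) φ₁ < _
        exact div_lt_div_of_pos_left hnum (by positivity) hq
      have h4 : C * φ₁ * Real.log M₁ / (ρ * Real.log M₁) = C * φ₁ / ρ := by
        field_simp
      rw [h4] at h3
      calc f * ρ < (C * φ₁ / ρ) * ρ := by nlinarith
        _ = C * φ₁ := by field_simp
  set T : ℝ := f * (a + φ₁) / (C * φ₁ - f * ρ) with hT
  have hTnn : 0 ≤ T := by
    apply div_nonneg _ (by linarith)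
    have : 0 ≤ a + φ₁ := by linarith
    positivity
  set M₂ : ℕ := max (M₁ + 1) (⌈Real.exp T⌉₊ + 1) with hM₂
  have hM₂gt : M₁ < M₂ := lt_of_lt_of_le (Nat.lt_succ_self M₁) (le_max_left _ _)
  refine ⟨M₂, hM₂gt, ?_⟩
  have hM₂pos : 0 < M₂ := lt_trans hM₁ hM₂gt
  have hexp : Real.exp T < (M₂:ℝ) := by
    have h5 : Real.exp T ≤ (⌈Real.exp T⌉₊ : ℝ) := Nat.le_ceil _
    have h6 : (⌈Real.exp T⌉₊ + 1 : ℕ) ≤ M₂ := le_max_right _ _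
    have h7 : ((⌈Real.exp T⌉₊ + 1 : ℕ) : ℝ) ≤ (M₂:ℝ) := by exact_mod_cast h6
    push_cast at h7
    linarith
  set x : ℝ := Real.log M₂ with hx
  have hxT : T < x := (Real.lt_log_iff_exp_lt (by exact_mod_cast hM₂pos)).mpr hexp
  have hx0 : 0 ≤ x := le_trans hTnn hxT.le
  have hSM₂ : S₁ M₂ = a + ρ * x := rfl
  have hSpos : 0 < S₁ M₂ := by rw [hSM₂]; positivity
  have hD : 0 < a + ρ * x + φ₁ := by positivity
  -- main inequality : f < C*φ₁*x / (a + ρ*x + φ₁)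
  have hmul : f * (a + φ₁) < x * (C * φ₁ - f * ρ) := by
    have := (div_lt_iff₀ (by linarith : (0:ℝ) < C * φ₁ - f * ρ)).mp hxT
    linarith
  have h8 : f < C * φ₁ * x / (a + ρ * x + φ₁) := by
    rw [lt_div_iff₀ hD]; nlinarith
  have h9 : C * φ₁ * x / (a + ρ * x + φ₁) ≤ C * φ₁ * x / qceil (S₁ M₂) φ₁ := by
    apply div_le_div_of_nonneg_left (by positivity) (qceil_pos hφ)
    calc qceil (S₁ M₂) φ₁ ≤ S₁ M₂ + φ₁ := qceil_le hφ hSpos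
      _ = a + ρ * x + φ₁ := by rw [hSM₂]
  show f < C * φ₁ * x / qceil (S₁ M₂) φ₁
  exact lt_of_lt_of_le h8 h9
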